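/- Assume α₁, α₂, α₃ > 0 and let σ ∈ ℝ. Then for every x = (x₁,x₂,x₃) ∈ ℝ³, 2⟨x, b(x)⟩ + σ²(x₁²+x₂²+x₃²) ≤ (2·max{α₁, α₂, α₃} + σ²)·(x₁²+x₂²+x₃²). (This is the Lyapunov estimate ℒV(x) ≤ (2 max αᵢ + σ²)V(x) for V(x) = ‖x‖², where ℒ is the generator of the system perturbed by linear multiplicative noise of intensity σ, used to prove global existence of solutions.) -/

import Mathlib

open scoped RealInnerProductSpace

/-- The cubic Kolmogorov vector field on `ℝ³` (modelled as `EuclideanSpace ℝ (Fin 3)`):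
`b(x)₁ = x₁(α₁ − α₁x₁² − (α₁+α₂+d₁)x₂² + d₂x₃²)`,
`b(x)₂ = x₂(α₂ + d₁x₁² − α₂x₂² − (α₂+α₃+d₃)x₃²)`,
`b(x)₃ = x₃(α₃ − (α₃+α₁+d₂)x₁² + d₃x₂² − α₃x₃²)`. -/
noncomputable def bVF (α₁ α₂ α₃ d₁ d₂ d₃ : ℝ) (x : EuclideanSpace ℝ (Fin 3)) :
    EuclideanSpace ℝ (Fin 3) :=
  (WithLp.equiv 2 (Fin 3 → ℝ)).symm
    ![x 0 * (α₁ - α₁ * (x 0)^2 - (α₁ + α₂ + d₁) * (x 1)^2 + d₂ * (x 2)^2),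
      x 1 * (α₂ + d₁ * (x 0)^2 - α₂ * (x 1)^2 - (α₂ + α₃ + d₃) * (x 2)^2),
      x 2 * (α₃ - (α₃ + α₁ + d₂) * (x 0)^2 + d₃ * (x 1)^2 - α₃ * (x 2)^2)]

/-- The Lyapunov estimate `ℒV(x) ≤ (2 max αᵢ + σ²) V(x)` for `V(x) = ‖x‖²`:
`2⟨x, b(x)⟩ + σ²‖x‖² ≤ (2 max{α₁,α₂,α₃} + σ²)‖x‖²`. -/
theorem generator_estimate (α₁ α₂ α₃ d₁ d₂ d₃ σ : ℝ)
    (hα₁ : 0 < α₁) (hα₂ : 0 < α₂) (hα₃ : 0 < α₃)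
    (x : EuclideanSpace ℝ (Fin 3)) :
    2 * ⟪x, bVF α₁ α₂ α₃ d₁ d₂ d₃ x⟫ + σ ^ 2 * ((x 0)^2 + (x 1)^2 + (x 2)^2)
      ≤ (2 * max α₁ (max α₂ α₃) + σ ^ 2) * ((x 0)^2 + (x 1)^2 + (x 2)^2) := by
  have h1 : α₁ ≤ max α₁ (max α₂ α₃) := le_max_left _ _
  have h2 : α₂ ≤ max α₁ (max α₂ α₃) := le_trans (le_max_left _ _) (le_max_right _ _)
  have h3 : α₃ ≤ max α₁ (max α₂ α₃) := le_trans (le_max_right _ _) (le_max_right _ _)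
  simp only [bVF, real_inner_eq_re_inner, PiLp.inner_apply, RCLike.inner_apply, map_sum,
    Fin.sum_univ_three, WithLp.equiv_symm_apply, PiLp.toLp_apply, Matrix.cons_val_zero, Matrix.cons_val_one,
    Matrix.head_cons, Matrix.cons_val_two, Matrix.tail_cons, conj_trivial]
  nlinarith [mul_nonneg (sub_nonneg.2 h1) (sq_nonneg (x 0)),
    mul_nonneg (sub_nonneg.2 h2) (sq_nonneg (x 1)),
    mul_nonneg (sub_nonneg.2 h3) (sq_nonneg (x 2)),
    mul_nonneg hα₁.le (sq_nonneg ((x 0)^2)),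
    mul_nonneg hα₂.le (sq_nonneg ((x 1)^2)),
    mul_nonneg hα₃.le (sq_nonneg ((x 2)^2)),
    mul_nonneg (add_pos hα₁ hα₂).le (mul_nonneg (sq_nonneg (x 0)) (sq_nonneg (x 1))),
    mul_nonneg (add_pos hα₂ hα₃).le (mul_nonneg (sq_nonneg (x 1)) (sq_nonneg (x 2))),
    mul_nonneg (add_pos hα₁ hα₃).le (mul_nonneg (sq_nonneg (x 0)) (sq_nonneg (x 2)))]
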